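/- Let f : [a, ∞) → ℝ be C¹ and bounded, and suppose 2f(r) − f'(r) converges to a limit L as r → ∞. Then f(r) → L/2 and f'(r) → 0 as r → ∞. -/

import Mathlib

open Filter

/-- If `f` is `C¹` and bounded on `[a,∞)` and `2f - f'` tends to `L` at `+∞`,
then `f → L/2` and `f' → 0` at `+∞`. -/
theorem stmt11 (a : ℝ) (f : ℝ → ℝ) (hf : ContDiff ℝ 1 f)
    (hbdd : ∃ C : ℝ, ∀ r ∈ Set.Ici a, |f r| ≤ C)
    (L : ℝ)
    (hlim : Tendsto (fun r => 2 * f r - deriv f r) atTop (nhds L)) :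
    Tendsto f atTop (nhds (L / 2)) ∧ Tendsto (deriv f) atTop (nhds 0) := by
  obtain ⟨C, hC⟩ := hbdd
  have hdiff : Differentiable ℝ f := hf.differentiable one_ne_zero
  have hcd : Continuous (deriv f) := hf.continuous_deriv le_rfl
  set u : ℝ → ℝ := fun t => Real.exp (-2*t) * (f t - L/2) with hu
  set u' : ℝ → ℝ := fun t => Real.exp (-2*t) * (deriv f t - 2 * f t + L) with hu'
  have hU : ∀ t, HasDerivAt u (u' t) t := by
    intro t
    have h1 : HasDerivAt (fun t : ℝ => Real.exp (-2*t)) (Real.exp (-2*t) * (-2)) t := by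
      simpa using ((hasDerivAt_id t).const_mul (-2)).exp
    have h2 : HasDerivAt (fun t => f t - L/2) (deriv f t) t :=
      ((hdiff t).hasDerivAt).sub_const _
    have h3 := h1.mul h2
    refine h3.congr_deriv ?_
    simp [hu']; ring
  have hu'cont : Continuous u' := by
    apply Continuous.mul
    · exact Real.continuous_exp.comp (continuous_const.mul continuous_id)
    · exact ((hcd.sub (continuous_const.mul hdiff.continuous)).add continuous_const)
  -- limit of |u s|
  have hus : Tendsto (fun s => |u s|) atTop (nhds 0) := by
    have h0 : Tendsto (fun s : ℝ => Real.exp (-2*s) * (C + |L/2|)) atTop (nhds 0) := by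
      have h1 : Tendsto (fun s : ℝ => Real.exp (-2*s)) atTop (nhds 0) := by
        have h2 : Tendsto (fun s : ℝ => 2*s) atTop atTop :=
          tendsto_id.const_mul_atTop (by norm_num)
        have h3 := Real.tendsto_exp_neg_atTop_nhds_zero.comp h2
        refine h3.congr fun s => ?_
        simp [Function.comp]
      simpa using h1.mul_const (C + |L/2|)
    apply squeeze_zero' (Eventually.of_forall fun s => abs_nonneg _)
    · filter_upwards [eventually_ge_atTop a] with s hs
      have h1 : |f s - L/2| ≤ C + |L/2| := (abs_sub _ _).trans (by gcongr; exact hC s hs)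
      calc |u s| = Real.exp (-2*s) * |f s - L/2| := by
            rw [hu, abs_mul, abs_of_pos (Real.exp_pos _)]
        _ ≤ Real.exp (-2*s) * (C + |L/2|) := by gcongr
    · exact h0
  have key : ∀ ε > 0, ∀ᶠ r in atTop, |f r - L/2| ≤ ε/2 := by
    intro ε hε
    obtain ⟨R, hR⟩ := Metric.tendsto_atTop.mp hlim ε hε
    filter_upwards [eventually_ge_atTop (max a R)] with r hr
    have hrR : R ≤ r := le_trans (le_max_right a R) hr
    have hψc : Continuous fun t : ℝ => ε * Real.exp (-2*t) :=
      continuous_const.mul (Real.continuous_exp.comp (continuous_const.mul continuous_id))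
    have hbound : ∀ s, r ≤ s → |u r| - ε/2 * Real.exp (-2*r) ≤ |u s| := by
      intro s hs
      have hI : ∫ t in r..s, u' t = u s - u r :=
        intervalIntegral.integral_eq_sub_of_hasDerivAt (fun t _ => hU t)
          (hu'cont.intervalIntegrable r s)
      have hψ : ∫ t in r..s, ε * Real.exp (-2*t)
          = (-(ε/2) * Real.exp (-2*s)) - (-(ε/2) * Real.exp (-2*r)) := by
        have hd : ∀ t ∈ Set.uIcc r s,
            HasDerivAt (fun t : ℝ => -(ε/2) * Real.exp (-2*t)) (ε * Real.exp (-2*t)) t := by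
          intro t _
          have h1 : HasDerivAt (fun t : ℝ => Real.exp (-2*t)) (Real.exp (-2*t) * (-2)) t := by
            simpa using ((hasDerivAt_id t).const_mul (-2)).exp
          have := h1.const_mul (-(ε/2))
          refine this.congr_deriv ?_; ring
        exact intervalIntegral.integral_eq_sub_of_hasDerivAt hd (hψc.intervalIntegrable r s)
      have hle : |∫ t in r..s, u' t| ≤ ∫ t in r..s, ε * Real.exp (-2*t) := by
        refine (intervalIntegral.abs_integral_le_integral_abs hs).trans ?_
        refine intervalIntegral.integral_mono_on hs
          (hu'cont.abs.intervalIntegrable r s) (hψc.intervalIntegrable r s) ?_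
        intro t ht
        have h2 := hR t (le_trans hrR ht.1)
        rw [Real.dist_eq] at h2
        have h3 : |deriv f t - 2 * f t + L| ≤ ε := by
          rw [show deriv f t - 2 * f t + L = -((2 * f t - deriv f t) - L) by ring, abs_neg]
          exact h2.le
        calc |u' t| = Real.exp (-2*t) * |deriv f t - 2 * f t + L| := by
              rw [hu', abs_mul, abs_of_pos (Real.exp_pos _)]
          _ ≤ Real.exp (-2*t) * ε := by gcongr
          _ = ε * Real.exp (-2*t) := mul_comm _ _
      rw [hI] at hle
      rw [hψ] at hle
      have hexp : Real.exp (-2*s) ≥ 0 := (Real.exp_pos _).le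
      have htri : |u r| - |u s| ≤ |u s - u r| := by
        have := abs_sub_abs_le_abs_sub (u r) (u s)
        rw [abs_sub_comm] at this
        linarith
      nlinarith
    have hur : |u r| ≤ ε/2 * Real.exp (-2*r) := by
      have := ge_of_tendsto hus (eventually_atTop.mpr ⟨r, hbound⟩)
      linarith
    have hexp : (0:ℝ) < Real.exp (-2*r) := Real.exp_pos _
    have : Real.exp (-2*r) * |f r - L/2| ≤ ε/2 * Real.exp (-2*r) := by
      calc Real.exp (-2*r) * |f r - L/2| = |u r| := by
            rw [hu, abs_mul, abs_of_pos hexp]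
        _ ≤ _ := hur
    nlinarith
  have hT1 : Tendsto f atTop (nhds (L / 2)) := by
    rw [Metric.tendsto_atTop]
    intro ε hε
    obtain ⟨N, hN⟩ := eventually_atTop.mp (key ε hε)
    refine ⟨N, fun n hn => ?_⟩
    have h4 := hN n hn
    rw [Real.dist_eq]
    linarith
  refine ⟨hT1, ?_⟩
  have h2 : Tendsto (fun r => 2 * f r - (2 * f r - deriv f r)) atTop (nhds (2 * (L/2) - L)) :=
    (hT1.const_mul 2).sub hlim
  have : (2 * (L/2) - L) = 0 := by ring
  rw [this] at h2
  exact h2.congr fun r => by ring
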